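/- (Elashvili condition for the adjoint action, content of Theorem 4.1.) The image of the map ad(e_1) : g_k → g_k, x ↦ [x, e_1], equals u_k = span_ℂ{e_2, …, e_k}; the centralizer z_{g_k}(e_1) = { x ∈ g_k : [x, e_1] = 0 } equals ℂ·e_1 and is abelian; and g_k decomposes as the direct sum g_k = [g_k, e_1] ⊕ z_{g_k}(e_1). -/

import Mathlib

/-- The matrix `e_s` with `(e_s)_{i,j} = i` if `j = i + s - 1` and `0` otherwise. -/
def Emat (k s : ℕ) : Matrix (Fin k) (Fin k) ℂ :=
  fun i j => if (j : ℕ) + 1 = (i : ℕ) + s then ((i : ℕ) + 1 : ℂ) else 0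

/-- `g_k = span_ℂ{e_1, …, e_k}`. -/
noncomputable def gkAlg (k : ℕ) : Submodule ℂ (Matrix (Fin k) (Fin k) ℂ) :=
  Submodule.span ℂ (Emat k '' {s | 1 ≤ s ∧ s ≤ k})

/-- `u_k = span_ℂ{e_2, …, e_k}`. -/
noncomputable def ukAlg (k : ℕ) : Submodule ℂ (Matrix (Fin k) (Fin k) ℂ) :=
  Submodule.span ℂ (Emat k '' {s | 2 ≤ s ∧ s ≤ k})

/-- Elashvili condition for the adjoint action: the image of `ad(e_1) : g_k → g_k`,
`x ↦ [x, e_1]`, equals `u_k`; the centralizer `z_{g_k}(e_1)` equals `ℂ·e_1` and is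
abelian; and `g_k = [g_k, e_1] ⊕ z_{g_k}(e_1)`. -/
lemma Emat_one (k : ℕ) : Emat k 1 = Matrix.diagonal (fun i : Fin k => ((i : ℕ) + 1 : ℂ)) := by
  ext i j
  have hiff : ((j : ℕ) + 1 = (i : ℕ) + 1) ↔ i = j := by
    constructor
    · intro h; exact (Fin.ext (by omega)).symm
    · intro h; subst h; rfl
  simp only [Emat, Matrix.diagonal_apply, hiff]

noncomputable def adE (k : ℕ) : Matrix (Fin k) (Fin k) ℂ →ₗ[ℂ] Matrix (Fin k) (Fin k) ℂ :=
  LinearMap.mulRight ℂ (Emat k 1) - LinearMap.mulLeft ℂ (Emat k 1)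

lemma adE_apply (k : ℕ) (x : Matrix (Fin k) (Fin k) ℂ) :
    adE k x = x * Emat k 1 - Emat k 1 * x := rfl

lemma adE_Emat (k s : ℕ) : adE k (Emat k s) = ((s : ℂ) - 1) • Emat k s := by
  rw [adE_apply, Emat_one]
  ext i j
  simp only [Matrix.sub_apply, Matrix.mul_diagonal, Matrix.diagonal_mul, Matrix.smul_apply,
    Emat, smul_eq_mul]
  by_cases h : (j : ℕ) + 1 = (i : ℕ) + s
  · simp only [h, if_pos rfl, if_true]
    have hc : ((j : ℕ) : ℂ) + 1 = (i : ℕ) + s := by exact_mod_cast h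
    ring_nf
    linear_combination ((i : ℂ) + 1) * hc
  · simp [h]

lemma gk_struct (k : ℕ) [NeZero k] {x : Matrix (Fin k) (Fin k) ℂ} (hx : x ∈ gkAlg k)
    (i j : Fin k) :
    x i j = ((i : ℕ) + 1 : ℂ) *
      (if h : (i : ℕ) ≤ (j : ℕ) then
        x 0 ⟨(j : ℕ) - (i : ℕ), lt_of_le_of_lt (Nat.sub_le _ _) j.isLt⟩ else 0) := by
  induction hx using Submodule.span_induction with
  | mem y hy =>
    obtain ⟨s, hs, rfl⟩ := hy
    simp only [Set.mem_setOf_eq] at hs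
    obtain ⟨hs1, hs2⟩ := hs
    have h0 : ((0 : Fin k) : ℕ) = 0 := rfl
    by_cases h : (i : ℕ) ≤ (j : ℕ)
    · simp only [dif_pos h, Emat]
      by_cases hc : (j : ℕ) + 1 = (i : ℕ) + s
      · rw [if_pos hc, if_pos (by simp only [h0]; omega), h0]
        push_cast; ring
      · rw [if_neg hc, if_neg (by simp only [h0]; omega), mul_zero]
    · simp only [dif_neg h, mul_zero, Emat]
      rw [if_neg (by omega)]
  | zero => simp
  | add y z hy hz ihy ihz =>
    simp only [Matrix.add_apply, ihy, ihz]
    by_cases h : (i : ℕ) ≤ (j : ℕ) <;> simp [h] <;> ring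
  | smul a y hy ihy =>
    simp only [Matrix.smul_apply, ihy, smul_eq_mul]
    by_cases h : (i : ℕ) ≤ (j : ℕ) <;> simp [h] <;> ring

lemma uk_struct (k : ℕ) {x : Matrix (Fin k) (Fin k) ℂ} (hx : x ∈ ukAlg k)
    {i j : Fin k} (hij : (j : ℕ) ≤ (i : ℕ)) : x i j = 0 := by
  induction hx using Submodule.span_induction with
  | mem y hy =>
    obtain ⟨s, hs, rfl⟩ := hy
    simp only [Set.mem_setOf_eq] at hs
    obtain ⟨hs1, hs2⟩ := hs
    simp only [Emat]
    rw [if_neg (by omega)]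
  | zero => simp
  | add y z hy hz ihy ihz => simp [Matrix.add_apply, ihy, ihz]
  | smul a y hy ihy => simp [Matrix.smul_apply, ihy]

lemma hk1 (k : ℕ) [NeZero k] : 1 ≤ k := Nat.one_le_iff_ne_zero.mpr (NeZero.ne k)

lemma Emat_mem_gk (k : ℕ) [NeZero k] : Emat k 1 ∈ gkAlg k :=
  Submodule.subset_span ⟨1, ⟨le_refl 1, hk1 k⟩, rfl⟩

lemma adE_map (k : ℕ) [NeZero k] : Submodule.map (adE k) (gkAlg k) = ukAlg k := by
  rw [gkAlg, Submodule.map_span]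
  apply le_antisymm
  · rw [Submodule.span_le]
    rintro _ ⟨_, ⟨s, hs, rfl⟩, rfl⟩
    simp only [Set.mem_setOf_eq] at hs
    rw [adE_Emat]
    rcases eq_or_lt_of_le hs.1 with h1 | h2
    · rw [← h1]; norm_num
    · exact Submodule.smul_mem _ _ (Submodule.subset_span ⟨s, ⟨h2, hs.2⟩, rfl⟩)
  · rw [ukAlg, Submodule.span_le]
    rintro _ ⟨s, hs, rfl⟩
    simp only [Set.mem_setOf_eq] at hs
    have hne : ((s : ℂ) - 1) ≠ 0 := by
      rw [sub_ne_zero]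
      exact_mod_cast (by omega : s ≠ 1)
    have he : Emat k s = ((s : ℂ) - 1)⁻¹ • (((s : ℂ) - 1) • Emat k s) := by
      rw [smul_smul, inv_mul_cancel₀ hne, one_smul]
    rw [he]
    exact Submodule.smul_mem _ _
      (Submodule.subset_span ⟨Emat k s, ⟨s, ⟨by omega, hs.2⟩, rfl⟩, adE_Emat k s⟩)

theorem elashvili_adjoint (k : ℕ) [NeZero k] :
    ({z | ∃ x ∈ gkAlg k, z = x * Emat k 1 - Emat k 1 * x} = (ukAlg k : Set _)) ∧
    ({x | x ∈ gkAlg k ∧ x * Emat k 1 - Emat k 1 * x = 0}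
        = (Submodule.span ℂ {Emat k 1} : Set (Matrix (Fin k) (Fin k) ℂ))) ∧
    (∀ x ∈ Submodule.span ℂ {Emat k 1}, ∀ y ∈ Submodule.span ℂ {Emat k 1},
        x * y = y * x) ∧
    (ukAlg k ⊔ Submodule.span ℂ {Emat k 1} = gkAlg k) ∧
    (ukAlg k ⊓ Submodule.span ℂ {Emat k 1} = ⊥) := by
  refine ⟨?_, ?_, ?_, ?_, ?_⟩
  · -- image of ad(e1)
    rw [← adE_map k]
    ext z
    simp only [Set.mem_setOf_eq, SetLike.mem_coe, Submodule.mem_map, adE_apply]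
    constructor
    · rintro ⟨x, hx, rfl⟩; exact ⟨x, hx, rfl⟩
    · rintro ⟨x, hx, rfl⟩; exact ⟨x, hx, rfl⟩
  · -- centralizer
    ext x
    simp only [Set.mem_setOf_eq, SetLike.mem_coe, Submodule.mem_span_singleton]
    constructor
    · rintro ⟨hx, hcomm⟩
      refine ⟨x 0 0, ?_⟩
      ext i j
      have hentry : ∀ a b : Fin k, (x * Emat k 1 - Emat k 1 * x) a b
          = x a b * (((b : ℕ) : ℂ) - ((a : ℕ) : ℂ)) := by
        intro a b
        rw [Emat_one]
        simp only [Matrix.sub_apply, Matrix.mul_diagonal, Matrix.diagonal_mul]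
        ring
      have hzero : ∀ a b : Fin k, x a b * (((b : ℕ) : ℂ) - ((a : ℕ) : ℂ)) = 0 := by
        intro a b; rw [← hentry, hcomm]; rfl
      have h0 : ((0 : Fin k) : ℕ) = 0 := rfl
      rcases lt_trichotomy ((i : ℕ)) ((j : ℕ)) with h | h | h
      · -- strictly above diagonal: x i j = 0 from commutation
        have hne : (((j : ℕ) : ℂ) - ((i : ℕ) : ℂ)) ≠ 0 := by
          rw [sub_ne_zero]
          exact_mod_cast Nat.ne_of_gt h
        have := hzero i j
        have hx0 : x i j = 0 := by
          rcases mul_eq_zero.mp this with h' | h'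
          · exact h'
          · exact absurd h' hne
        rw [hx0, Matrix.smul_apply, Emat, if_neg (by omega), smul_zero]
      · -- diagonal
        have hst := gk_struct k hx i j
        rw [dif_pos (le_of_eq h)] at hst
        have hsub : (⟨(j : ℕ) - (i : ℕ), lt_of_le_of_lt (Nat.sub_le _ _) j.isLt⟩ : Fin k)
            = 0 := by
          apply Fin.ext
          show (j : ℕ) - (i : ℕ) = ((0 : Fin k) : ℕ)
          omega
        rw [hsub] at hst
        rw [Matrix.smul_apply, Emat, if_pos (by omega), hst, smul_eq_mul]
        ring
      · -- below diagonal
        have := gk_struct k hx i j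
        rw [dif_neg (by omega), mul_zero] at this
        rw [this, Matrix.smul_apply, Emat, if_neg (by omega), smul_zero]
    · rintro ⟨c, rfl⟩
      refine ⟨Submodule.smul_mem _ _ (Emat_mem_gk k), ?_⟩
      rw [smul_mul_assoc, mul_smul_comm, sub_self]
  · -- abelian
    intro x hx y hy
    rw [Submodule.mem_span_singleton] at hx hy
    obtain ⟨a, rfl⟩ := hx
    obtain ⟨b, rfl⟩ := hy
    rw [smul_mul_assoc, mul_smul_comm, smul_mul_assoc, mul_smul_comm, smul_smul, smul_smul,
      mul_comm a b]
  · -- sup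
    have hset : {s | 1 ≤ s ∧ s ≤ k} = {s | 2 ≤ s ∧ s ≤ k} ∪ {1} := by
      ext s
      simp only [Set.mem_union, Set.mem_setOf_eq, Set.mem_singleton_iff]
      have := hk1 k
      omega
    rw [ukAlg, gkAlg, ← Submodule.span_union, hset, Set.image_union, Set.image_singleton]
  · -- inf
    rw [eq_bot_iff]
    intro x hx
    rw [Submodule.mem_inf] at hx
    obtain ⟨hxu, hxs⟩ := hx
    rw [Submodule.mem_span_singleton] at hxs
    obtain ⟨c, rfl⟩ := hxs
    have h00 : (c • Emat k 1) 0 0 = 0 := uk_struct k hxu (le_refl _)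
    rw [Matrix.smul_apply, Emat, if_pos rfl, smul_eq_mul] at h00
    have h0 : ((0 : Fin k) : ℕ) = 0 := rfl
    rw [h0] at h00
    norm_num at h00
    rw [Submodule.mem_bot, h00, zero_smul]
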